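/- Let τ ∈ (0,1), κ > 0, A ∈ ℝ^{n×p} with rows A₁,…,Aₙ, b ∈ ℝⁿ, and let L_n(x) = (1/n)·Σ_{i=1}^{n} ρ_{τ,κ}(bᵢ − Aᵢᵀx). Let E ⊆ {1,…,n} be an index set and B ⊆ ℝᵖ a set such that for every x ∈ B and every i ∈ E, the residual bᵢ − Aᵢᵀx lies in [−κτ, (1−τ)κ]. Suppose the restricted eigenvalue property holds with constant γ > 0 on differences of vectors in B: (1/n)·‖A_E(x − x′)‖₂² ≥ γ·‖x − x′‖₂² for all x, x′ ∈ B, where A_E is the submatrix of A consisting of the rows in E. Then L_n is strongly convex on B with modulus γ/κ: for all x, x′ ∈ B, L_n(x′) ≥ L_n(x) + ⟨∇L_n(x), x′ − x⟩ + (γ/(2κ))·‖x′ − x‖₂². -/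

import Mathlib

open RealInnerProductSpace

/-- The quantile Huber penalty with quantile parameter `τ` and smoothing parameter `κ`. -/
noncomputable def qHuber (τ κ x : ℝ) : ℝ :=
  if x < -(τ * κ) then τ * |x| - κ * τ ^ 2 / 2
  else if x ≤ (1 - τ) * κ then x ^ 2 / (2 * κ)
  else (1 - τ) * |x| - κ * (1 - τ) ^ 2 / 2

noncomputable def qHuberDeriv (τ κ x : ℝ) : ℝ :=
  if x < -(τ * κ) then -τ else if x ≤ (1 - τ) * κ then x / κ else (1 - τ)

section lemmas
variable {τ κ : ℝ} (hτ0 : 0 < τ) (hτ1 : τ < 1) (hκ : 0 < κ)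
include hτ0 hτ1 hκ

lemma qHuber_eq_left : ∀ y ≤ -(τ * κ), qHuber τ κ y = -(τ * y) - κ * τ ^ 2 / 2 := by
  intro y hy
  have hc : 0 < τ * κ := mul_pos hτ0 hκ
  rcases lt_or_eq_of_le hy with h | h
  · rw [qHuber, if_pos h, abs_of_neg (by linarith)]
    ring
  · rw [qHuber, if_neg (by rw [h]; exact lt_irrefl _), if_pos (by nlinarith), h]
    field_simp
    ring

lemma qHuber_eq_mid : ∀ y, -(τ * κ) ≤ y → y ≤ (1 - τ) * κ → qHuber τ κ y = y ^ 2 / (2 * κ) := by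
  intro y h1 h2
  rw [qHuber, if_neg (not_lt.2 h1), if_pos h2]

lemma qHuber_eq_right : ∀ y, (1 - τ) * κ ≤ y → qHuber τ κ y = (1 - τ) * y - κ * (1 - τ) ^ 2 / 2 := by
  intro y hy
  have hd : 0 < (1 - τ) * κ := mul_pos (by linarith) hκ
  have hc : 0 < τ * κ := mul_pos hτ0 hκ
  rcases lt_or_eq_of_le hy with h | h
  · rw [qHuber, if_neg (by push_neg; nlinarith), if_neg (not_le.2 h), abs_of_pos (by linarith)]
  · rw [qHuber, if_neg (by push_neg; nlinarith), if_pos (le_of_eq h.symm), ← h]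
    field_simp
    ring

lemma qHuberDeriv_eq_mid : ∀ y, -(τ * κ) ≤ y → y ≤ (1 - τ) * κ → qHuberDeriv τ κ y = y / κ := by
  intro y h1 h2
  rw [qHuberDeriv, if_neg (not_lt.2 h1), if_pos h2]

lemma qHuber_hasDerivAt (x : ℝ) : HasDerivAt (qHuber τ κ) (qHuberDeriv τ κ x) x := by
  have hc : 0 < τ * κ := mul_pos hτ0 hκ
  have hd : 0 < (1 - τ) * κ := mul_pos (by linarith) hκ
  have hg1 : ∀ y : ℝ, HasDerivAt (fun y => -(τ * y) - κ * τ ^ 2 / 2) (-τ) y := by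
    intro y
    simpa using (((hasDerivAt_id y).const_mul τ).neg.sub_const (κ * τ ^ 2 / 2))
  have hg2 : ∀ y : ℝ, HasDerivAt (fun y => y ^ 2 / (2 * κ)) (y / κ) y := by
    intro y
    have h := (hasDerivAt_pow 2 y).div_const (2 * κ)
    refine h.congr_deriv ?_
    field_simp
    ring
  have hg3 : ∀ y : ℝ, HasDerivAt (fun y => (1 - τ) * y - κ * (1 - τ) ^ 2 / 2) (1 - τ) y := by
    intro y
    simpa using (((hasDerivAt_id y).const_mul (1 - τ)).sub_const (κ * (1 - τ) ^ 2 / 2))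
  rcases lt_trichotomy x (-(τ * κ)) with h | h | h
  · rw [qHuberDeriv, if_pos h]
    refine (hg1 x).congr_of_eventuallyEq ?_
    filter_upwards [Iio_mem_nhds h] with y hy
    exact qHuber_eq_left hτ0 hτ1 hκ y (le_of_lt hy)
  · -- x = -(τ*κ)
    have hx1 : x ≤ (1 - τ) * κ := by nlinarith
    have hder : qHuberDeriv τ κ x = -τ := by
      rw [qHuberDeriv_eq_mid hτ0 hτ1 hκ x (le_of_eq h.symm) hx1, h]
      field_simp
    rw [hder]
    have left : HasDerivWithinAt (qHuber τ κ) (-τ) (Set.Iic x) x := by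
      refine ((hg1 x).hasDerivWithinAt).congr ?_ ?_
      · intro y hy
        exact qHuber_eq_left hτ0 hτ1 hκ y (le_trans hy h.le)
      · exact qHuber_eq_left hτ0 hτ1 hκ x h.le
    have right : HasDerivWithinAt (qHuber τ κ) (-τ) (Set.Ici x) x := by
      have hval : x / κ = -τ := by rw [h]; field_simp
      have h2 : HasDerivWithinAt (fun y => y ^ 2 / (2 * κ)) (-τ) (Set.Ici x) x := by
        rw [← hval]; exact (hg2 x).hasDerivWithinAt
      refine h2.congr_of_eventuallyEq ?_ ?_
      · have hmem : Set.Iio ((1 - τ) * κ) ∈ nhdsWithin x (Set.Ici x) :=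
          mem_nhdsWithin_of_mem_nhds (Iio_mem_nhds (by nlinarith))
        filter_upwards [hmem, self_mem_nhdsWithin] with y h1 h2
        exact qHuber_eq_mid hτ0 hτ1 hκ y (le_trans h.ge h2) (le_of_lt h1)
      · exact qHuber_eq_mid hτ0 hτ1 hκ x (le_of_eq h.symm) hx1
    have := left.union right
    rw [Set.Iic_union_Ici] at this
    exact hasDerivWithinAt_univ.mp this
  · rcases lt_trichotomy x ((1 - τ) * κ) with h2 | h2 | h2
    · rw [qHuberDeriv_eq_mid hτ0 hτ1 hκ x (le_of_lt h) (le_of_lt h2)]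
      refine (hg2 x).congr_of_eventuallyEq ?_
      filter_upwards [Ioo_mem_nhds h h2] with y hy
      exact qHuber_eq_mid hτ0 hτ1 hκ y (le_of_lt hy.1) (le_of_lt hy.2)
    · -- x = (1-τ)*κ
      have hder : qHuberDeriv τ κ x = 1 - τ := by
        rw [qHuberDeriv_eq_mid hτ0 hτ1 hκ x (le_of_lt h) (le_of_eq h2), h2]
        field_simp
      rw [hder]
      have left : HasDerivWithinAt (qHuber τ κ) (1 - τ) (Set.Iic x) x := by
        have hval : x / κ = 1 - τ := by rw [h2]; field_simp
        have hh : HasDerivWithinAt (fun y => y ^ 2 / (2 * κ)) (1 - τ) (Set.Iic x) x := by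
          rw [← hval]; exact (hg2 x).hasDerivWithinAt
        refine hh.congr_of_eventuallyEq ?_ ?_
        · have hmem : Set.Ioi (-(τ * κ)) ∈ nhdsWithin x (Set.Iic x) :=
            mem_nhdsWithin_of_mem_nhds (Ioi_mem_nhds h)
          filter_upwards [hmem, self_mem_nhdsWithin] with y h1 h2'
          exact qHuber_eq_mid hτ0 hτ1 hκ y (le_of_lt h1) (le_trans h2' (le_of_eq h2))
        · exact qHuber_eq_mid hτ0 hτ1 hκ x (le_of_lt h) (le_of_eq h2)
      have right : HasDerivWithinAt (qHuber τ κ) (1 - τ) (Set.Ici x) x := by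
        refine ((hg3 x).hasDerivWithinAt).congr ?_ ?_
        · intro y hy
          exact qHuber_eq_right hτ0 hτ1 hκ y (le_trans (le_of_eq h2.symm) hy)
        · exact qHuber_eq_right hτ0 hτ1 hκ x (le_of_eq h2.symm)
      have := left.union right
      rw [Set.Iic_union_Ici] at this
      exact hasDerivWithinAt_univ.mp this
    · have hder : qHuberDeriv τ κ x = 1 - τ := by
        rw [qHuberDeriv, if_neg (by push_neg; nlinarith), if_neg (not_le.2 h2)]
      rw [hder]
      refine (hg3 x).congr_of_eventuallyEq ?_
      filter_upwards [Ioi_mem_nhds h2] with y hy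
      exact qHuber_eq_right hτ0 hτ1 hκ y (le_of_lt hy)

end lemmas

section lemmas2
variable {τ κ : ℝ} (hτ0 : 0 < τ) (hτ1 : τ < 1) (hκ : 0 < κ)
include hτ0 hτ1 hκ

lemma qHuberDeriv_mono : Monotone (qHuberDeriv τ κ) := by
  intro a b hab
  have hc : 0 < τ * κ := mul_pos hτ0 hκ
  unfold qHuberDeriv
  split_ifs with h1 h2 h3 h4 h5 <;> (try push_neg at *) <;>
    first
      | linarith
      | (rw [le_div_iff₀ hκ]; nlinarith)
      | (rw [div_le_iff₀ hκ]; nlinarith)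
      | (rw [div_le_div_iff_of_pos_right hκ] <;> linarith)
      | gcongr

lemma qHuber_convexOn : ConvexOn ℝ Set.univ (qHuber τ κ) := by
  have hdiff : Differentiable ℝ (qHuber τ κ) :=
    fun x => (qHuber_hasDerivAt hτ0 hτ1 hκ x).differentiableAt
  have hder : deriv (qHuber τ κ) = qHuberDeriv τ κ :=
    funext fun x => (qHuber_hasDerivAt hτ0 hτ1 hκ x).deriv
  exact Monotone.convexOn_univ_of_deriv hdiff (hder ▸ qHuberDeriv_mono hτ0 hτ1 hκ)

lemma qHuber_first_order (a y : ℝ) :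
    qHuber τ κ a + qHuberDeriv τ κ a * (y - a) ≤ qHuber τ κ y := by
  have hcvx := qHuber_convexOn hτ0 hτ1 hκ
  rcases lt_trichotomy a y with h | h | h
  · have hs := hcvx.le_slope_of_hasDerivAt (Set.mem_univ a) (Set.mem_univ y) h
      (qHuber_hasDerivAt hτ0 hτ1 hκ a)
    rw [slope_def_field] at hs
    rw [le_div_iff₀ (by linarith)] at hs
    nlinarith
  · subst h; simp
  · have hs := hcvx.slope_le_of_hasDerivAt (Set.mem_univ y) (Set.mem_univ a) h
      (qHuber_hasDerivAt hτ0 hτ1 hκ a)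
    rw [slope_def_field] at hs
    rw [div_le_iff₀ (by linarith)] at hs
    nlinarith

end lemmas2

/-- Restricted strong convexity of the empirical quantile Huber loss: if all residuals
over `B` on the rows in `E` are inliers and `A_E` satisfies a restricted eigenvalue
property with constant `γ` on differences of points of `B`, then `L_n` is strongly
convex on `B` with modulus `γ/κ`. -/
theorem empirical_qHuber_strongly_convex (n p : ℕ) (τ κ : ℝ)
    (hτ : τ ∈ Set.Ioo (0 : ℝ) 1) (hκ : 0 < κ)
    (A : Matrix (Fin n) (Fin p) ℝ) (b : Fin n → ℝ)
    (Ln : EuclideanSpace ℝ (Fin p) → ℝ)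
    (hLn : ∀ x : EuclideanSpace ℝ (Fin p),
      Ln x = (1 / (n : ℝ)) * ∑ i, qHuber τ κ (b i - ∑ j, A i j * x j))
    (E : Finset (Fin n)) (B : Set (EuclideanSpace ℝ (Fin p)))
    (hinlier : ∀ x ∈ B, ∀ i ∈ E,
      b i - ∑ j, A i j * x j ∈ Set.Icc (-(κ * τ)) ((1 - τ) * κ))
    (γ : ℝ) (hγ : 0 < γ)
    (hRE : ∀ x ∈ B, ∀ x' ∈ B,
      (1 / (n : ℝ)) * ∑ i ∈ E, (∑ j, A i j * (x j - x' j)) ^ 2 ≥ γ * ‖x - x'‖ ^ 2) :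
    ∀ x ∈ B, ∀ x' ∈ B,
      Ln x' ≥ Ln x + ⟪gradient Ln x, x' - x⟫ + (γ / (2 * κ)) * ‖x' - x‖ ^ 2 := by
  obtain ⟨hτ0, hτ1⟩ := hτ
  intro x hx x' hx'
  set r : Fin n → ℝ := fun i => b i - ∑ j, A i j * x j with hr
  set r' : Fin n → ℝ := fun i => b i - ∑ j, A i j * x' j with hr'
  -- linear maps
  set M : Fin n → (EuclideanSpace ℝ (Fin p) →L[ℝ] ℝ) :=
    fun i => ∑ j, A i j • (EuclideanSpace.proj j : EuclideanSpace ℝ (Fin p) →L[ℝ] ℝ) with hMdef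
  have hM : ∀ i (v : EuclideanSpace ℝ (Fin p)), M i v = ∑ j, A i j * v j := by
    intro i v
    simp [hMdef]
  -- derivative of the affine residual maps
  have hfi : ∀ i, HasFDerivAt (fun z : EuclideanSpace ℝ (Fin p) => b i - ∑ j, A i j * z j)
      (-(M i)) x := by
    intro i
    have h1 : HasFDerivAt (fun z : EuclideanSpace ℝ (Fin p) => (M i) z) (M i) x :=
      (M i).hasFDerivAt
    have h2 := (hasFDerivAt_const (b i) x).sub h1
    rw [zero_sub] at h2
    have h3 : (fun z : EuclideanSpace ℝ (Fin p) => b i - M i z)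
        = fun z => b i - ∑ j, A i j * z j := funext fun z => by rw [hM]
    rw [← h3]; exact h2
  set Φ : EuclideanSpace ℝ (Fin p) →L[ℝ] ℝ :=
    (1 / (n : ℝ)) • ∑ i, qHuberDeriv τ κ (r i) • (-(M i)) with hΦdef
  have hΦ : HasFDerivAt Ln Φ x := by
    have h4 : ∀ i ∈ Finset.univ, HasFDerivAt
        (fun z : EuclideanSpace ℝ (Fin p) => qHuber τ κ (b i - ∑ j, A i j * z j))
        (qHuberDeriv τ κ (r i) • (-(M i))) x :=
      fun i _ => by have := (qHuber_hasDerivAt hτ0 hτ1 hκ (r i)).comp_hasFDerivAt x (hfi i); exact this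
    have h5 := HasFDerivAt.fun_sum h4
    have h6 := h5.const_mul (1 / (n : ℝ))
    have h7 : Ln = fun z : EuclideanSpace ℝ (Fin p) =>
        (1 / (n : ℝ)) * ∑ i, qHuber τ κ (b i - ∑ j, A i j * z j) := funext hLn
    rw [h7]
    exact h6
  have hgrad : gradient Ln x = (InnerProductSpace.toDual ℝ _).symm Φ := by
    simp only [gradient, hΦ.fderiv]
  have hinner : ⟪gradient Ln x, x' - x⟫ = Φ (x' - x) := by
    rw [hgrad, InnerProductSpace.toDual_symm_apply]
  have hdelta : ∀ i, M i (x' - x) = (r i) - (r' i) := by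
    intro i
    rw [hM]
    have hstep : ∑ j, A i j * ((x' - x : EuclideanSpace ℝ (Fin p)) j)
        = ∑ j, (A i j * x' j - A i j * x j) :=
      Finset.sum_congr rfl fun j _ => by
        show A i j * (x' j - x j) = _
        ring
    rw [hstep, Finset.sum_sub_distrib]
    simp only [hr, hr']
    ring
  have hΦval : Φ (x' - x) = (1 / (n : ℝ)) * ∑ i, qHuberDeriv τ κ (r i) * (r' i - r i) := by
    rw [hΦdef]
    simp only [ContinuousLinearMap.smul_apply, ContinuousLinearMap.sum_apply,
      ContinuousLinearMap.neg_apply, smul_eq_mul]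
    congr 1
    refine Finset.sum_congr rfl fun i _ => ?_
    rw [hdelta i]
    ring
  -- per-index inequality
  have key : ∀ i, qHuber τ κ (r i) + qHuberDeriv τ κ (r i) * (r' i - r i)
      + (if i ∈ E then (r' i - r i) ^ 2 / (2 * κ) else 0) ≤ qHuber τ κ (r' i) := by
    intro i
    by_cases hiE : i ∈ E
    · simp only [if_pos hiE]
      obtain ⟨h1, h2⟩ := hinlier x hx i hiE
      obtain ⟨h1', h2'⟩ := hinlier x' hx' i hiE
      rw [mul_comm κ τ] at h1 h1'
      have e1 : qHuber τ κ (r i) = (r i) ^ 2 / (2 * κ) := qHuber_eq_mid hτ0 hτ1 hκ _ h1 h2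
      have e2 : qHuber τ κ (r' i) = (r' i) ^ 2 / (2 * κ) := qHuber_eq_mid hτ0 hτ1 hκ _ h1' h2'
      have e3 : qHuberDeriv τ κ (r i) = r i / κ := qHuberDeriv_eq_mid hτ0 hτ1 hκ _ h1 h2
      rw [e1, e2, e3]
      apply le_of_eq
      field_simp
      ring
    · simp only [if_neg hiE, add_zero]
      exact qHuber_first_order hτ0 hτ1 hκ (r i) (r' i)
  have hn : (0 : ℝ) ≤ 1 / (n : ℝ) := by positivity
  have hsum : ∑ i, (qHuber τ κ (r i) + qHuberDeriv τ κ (r i) * (r' i - r i)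
      + (if i ∈ E then (r' i - r i) ^ 2 / (2 * κ) else 0)) ≤ ∑ i, qHuber τ κ (r' i) :=
    Finset.sum_le_sum fun i _ => key i
  rw [Finset.sum_add_distrib, Finset.sum_add_distrib] at hsum
  have hite : ∑ i, (if i ∈ E then (r' i - r i) ^ 2 / (2 * κ) else 0)
      = (∑ i ∈ E, (r' i - r i) ^ 2) / (2 * κ) := by
    rw [Finset.sum_ite_mem, Finset.univ_inter, Finset.sum_div]
  rw [hite] at hsum
  have h7 := mul_le_mul_of_nonneg_left hsum hn
  -- restricted eigenvalue part
  have hdd : ∀ i, (∑ j, A i j * (x j - x' j)) = r' i - r i := by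
    intro i
    have hstep : ∑ j, A i j * (x j - x' j) = ∑ j, (A i j * x j - A i j * x' j) :=
      Finset.sum_congr rfl fun j _ => by ring
    rw [hstep, Finset.sum_sub_distrib]
    simp only [hr, hr']
    ring
  have hRE' := hRE x hx x' hx'
  have hRE'' : γ * ‖x - x'‖ ^ 2 ≤ (1 / (n : ℝ)) * ∑ i ∈ E, (r' i - r i) ^ 2 := by
    calc γ * ‖x - x'‖ ^ 2 ≤ (1 / (n : ℝ)) * ∑ i ∈ E, (∑ j, A i j * (x j - x' j)) ^ 2 := hRE'
    _ = (1 / (n : ℝ)) * ∑ i ∈ E, (r' i - r i) ^ 2 := by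
        congr 1
        exact Finset.sum_congr rfl fun i _ => by rw [hdd i]
  have h8 : (γ / (2 * κ)) * ‖x' - x‖ ^ 2
      ≤ (1 / (n : ℝ)) * ((∑ i ∈ E, (r' i - r i) ^ 2) / (2 * κ)) := by
    have heq : (γ / (2 * κ)) * ‖x' - x‖ ^ 2 = (γ * ‖x - x'‖ ^ 2) / (2 * κ) := by
      rw [norm_sub_rev]; ring
    rw [heq]
    calc γ * ‖x - x'‖ ^ 2 / (2 * κ)
        ≤ ((1 / (n : ℝ)) * ∑ i ∈ E, (r' i - r i) ^ 2) / (2 * κ) := by gcongr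
    _ = (1 / (n : ℝ)) * ((∑ i ∈ E, (r' i - r i) ^ 2) / (2 * κ)) := by ring
  rw [hLn x, hLn x', hinner, hΦval]
  have hexp : (1 / (n : ℝ)) * (∑ i, qHuber τ κ (r i)
      + ∑ i, qHuberDeriv τ κ (r i) * (r' i - r i)
      + (∑ i ∈ E, (r' i - r i) ^ 2) / (2 * κ))
      = (1 / (n : ℝ)) * ∑ i, qHuber τ κ (r i)
      + (1 / (n : ℝ)) * ∑ i, qHuberDeriv τ κ (r i) * (r' i - r i)
      + (1 / (n : ℝ)) * ((∑ i ∈ E, (r' i - r i) ^ 2) / (2 * κ)) := by ring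
  rw [hexp] at h7
  linarith
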